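/- Let ℓ be an odd prime and k₁, k₂ ≥ 2 and n ≥ 1 integers. Then the componentwise reduction map modulo ℓ sends Λ_n onto Λ₁, and the number of pairs (d₁, d₂) ∈ Λ_n with d₁ ≡ 1 (mod ℓ) and d₂ ≡ 1 (mod ℓ) equals ℓ^{n−1}·λ₁/λ_n. -/

import Mathlib

open Subgroup

lemma aux1 {G H : Type*} [Group G] [Group H] [Finite G] (f : G →* H) :
    Nat.card f.range * Nat.card f.ker = Nat.card G := by
  rw [← Nat.card_congr (QuotientGroup.quotientKerEquivRange f).toEquiv,
    ← Subgroup.card_eq_card_quotient_mul_card_subgroup f.ker]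

lemma aux2 {G H : Type*} [Group G] [Group H] [Finite G] (f : G →* H) (K : Subgroup G)
    (hK : f.ker ≤ K) :
    Nat.card (K.map f) * Nat.card f.ker = Nat.card K := by
  have h1 := aux1 (f.comp K.subtype)
  rw [MonoidHom.range_comp, Subgroup.range_subtype] at h1
  have h2 : (f.comp K.subtype).ker = f.ker.subgroupOf K := rfl
  rw [h2, Nat.card_congr (Subgroup.subgroupOfEquivOfLe hK).toEquiv] at h1
  exact h1

lemma aux3 {G : Type*} [CommGroup G] [Finite G] [IsCyclic G] (g : ℕ) :
    Nat.card (powMonoidHom g : G →* G).ker = Nat.gcd (Nat.card G) g := by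
  obtain ⟨gen, hgen⟩ := IsCyclic.exists_generator (α := G)
  have hord : orderOf gen = Nat.card G := by
    haveI := Fintype.ofFinite G
    exact orderOf_eq_card_of_forall_mem_zpowers hgen
  have hrange : (powMonoidHom g : G →* G).range = Subgroup.zpowers (gen ^ g) := by
    apply le_antisymm
    · rintro x ⟨v, rfl⟩
      obtain ⟨k, rfl⟩ := hgen v
      refine ⟨k, ?_⟩
      show (gen ^ g) ^ k = (gen ^ k) ^ g
      rw [← zpow_natCast gen g, ← zpow_natCast (gen ^ k) g, ← zpow_mul, ← zpow_mul, mul_comm]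
    · rw [Subgroup.zpowers_le]
      exact ⟨gen, rfl⟩
  have hcr : Nat.card (powMonoidHom g : G →* G).range = Nat.card G / Nat.gcd (Nat.card G) g := by
    rw [hrange, Nat.card_zpowers, orderOf_pow, hord]
  have h1 := aux1 (powMonoidHom g : G →* G)
  rw [hcr] at h1
  have hd : Nat.gcd (Nat.card G) g ∣ Nat.card G := Nat.gcd_dvd_left _ _
  have hm0 : Nat.card G ≠ 0 := Nat.card_pos.ne'
  have hq : Nat.card G / Nat.gcd (Nat.card G) g * Nat.gcd (Nat.card G) g = Nat.card G :=
    Nat.div_mul_cancel hd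
  have hqpos : 0 < Nat.card G / Nat.gcd (Nat.card G) g := by
    rcases Nat.eq_zero_or_pos (Nat.card G / Nat.gcd (Nat.card G) g) with h | h
    · rw [h, zero_mul] at hq; omega
    · exact h
  apply Nat.eq_of_mul_eq_mul_left hqpos
  rw [h1, hq]

lemma key_dvd (p : ℕ) (hp : p.Prime) (hodd : p ≠ 2) (n m : ℕ) (hm : m ≠ 0) :
    ((p : ℤ) ^ n ∣ (1 + p : ℤ) ^ m - 1) ↔ p ^ (n - 1) ∣ m := by
  have hp1 : Odd p := hp.odd_of_ne_two hodd
  have hxy : (p : ℤ) ∣ (1 + p) - 1 := by simp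
  have hx : ¬(p : ℤ) ∣ (1 + p) := by
    intro h
    have : (p : ℤ) ∣ 1 := (dvd_add_right (dvd_refl _)).mp (by rwa [add_comm] at h)
    exact hp.one_lt.ne' (by exact_mod_cast Int.eq_one_of_dvd_one (by positivity) this)
  have hlte := Int.emultiplicity_pow_sub_pow hp hp1 hxy hx m
  rw [one_pow] at hlte
  have hself : emultiplicity (p : ℤ) ((1 + p) - 1) = 1 := by
    have : ((1 : ℤ) + p) - 1 = (p : ℤ) := by ring
    rw [this]
    exact FiniteMultiplicity.emultiplicity_self
      (Int.finiteMultiplicity_iff.mpr ⟨by simpa using hp.ne_one, by exact_mod_cast hp.pos.ne'⟩)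
  have hfinm : FiniteMultiplicity p m :=
    Nat.finiteMultiplicity_iff.mpr ⟨hp.ne_one, Nat.pos_of_ne_zero hm⟩
  rw [hself, hfinm.emultiplicity_eq_multiplicity] at hlte
  rw [pow_dvd_iff_le_emultiplicity, hlte, pow_dvd_iff_le_emultiplicity,
    hfinm.emultiplicity_eq_multiplicity]
  have : (1 : ℕ∞) + (multiplicity p m : ℕ∞) = ((1 + multiplicity p m : ℕ) : ℕ∞) := by
    push_cast; ring
  rw [this, Nat.cast_le, Nat.cast_le]
  omega

lemma cop_one_add (p N : ℕ) : Nat.Coprime (1 + p) (p ^ N) :=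
  Nat.Coprime.pow_right N
    (by unfold Nat.Coprime; rw [Nat.gcd_add_self_left]; exact Nat.gcd_one_left p)

lemma orderOf_one_add_p (p : ℕ) (hp : p.Prime) (hodd : p ≠ 2) (n : ℕ) :
    orderOf (ZMod.unitOfCoprime (n := p ^ n) (1 + p) (cop_one_add p n)) = p ^ (n - 1) := by
  haveI : Fact p.Prime := ⟨hp⟩
  haveI : NeZero (p ^ n) := ⟨pow_ne_zero n hp.pos.ne'⟩
  set u := ZMod.unitOfCoprime (n := p ^ n) (1 + p) (cop_one_add p n) with hu
  have hiff : ∀ m : ℕ, m ≠ 0 → (u ^ m = 1 ↔ p ^ (n - 1) ∣ m) := by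
    intro m hm
    rw [← key_dvd p hp hodd n m hm]
    rw [Units.ext_iff, Units.val_pow_eq_pow_val, Units.val_one, hu, ZMod.coe_unitOfCoprime]
    have hcast : ((1 + p : ℕ) : ZMod (p ^ n)) = (((1 + p : ℤ)) : ZMod (p ^ n)) := by
      push_cast; ring
    rw [hcast, ← Int.cast_pow, ← sub_eq_zero,
      show ((1 : ZMod (p ^ n))) = ((1 : ℤ) : ZMod (p ^ n)) by norm_num, ← Int.cast_sub,
      ZMod.intCast_zmod_eq_zero_iff_dvd]
    push_cast
    rfl
  have h1 : u ^ (p ^ (n - 1)) = 1 := (hiff _ (pow_ne_zero _ hp.pos.ne')).mpr dvd_rfl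
  have h2 : p ^ (n - 1) ∣ orderOf u := by
    have hord0 : orderOf u ≠ 0 := (orderOf_pos u).ne'
    exact (hiff _ hord0).mp (pow_orderOf_eq_one u)
  exact Nat.dvd_antisymm (orderOf_dvd_of_pow_eq_one h1) h2

lemma zmod_pow_units_isCyclic (p : ℕ) (hp : p.Prime) (hodd : p ≠ 2) (n : ℕ) (hn : 1 ≤ n) :
    IsCyclic (ZMod (p ^ n))ˣ := by
  haveI : Fact p.Prime := ⟨hp⟩
  haveI : NeZero (p ^ n) := ⟨pow_ne_zero n hp.pos.ne'⟩
  have hcard : Nat.card (ZMod (p ^ n))ˣ = p ^ (n - 1) * (p - 1) := by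
    rw [Nat.card_eq_fintype_card, ZMod.card_units_eq_totient, Nat.totient_prime_pow hp hn]
  set u := ZMod.unitOfCoprime (n := p ^ n) (1 + p) (cop_one_add p n) with hu
  have hou : orderOf u = p ^ (n - 1) := orderOf_one_add_p p hp hodd n
  obtain ⟨g, hg⟩ := IsCyclic.exists_generator (α := (ZMod p)ˣ)
  have hog : orderOf g = p - 1 := by
    have := orderOf_eq_card_of_forall_mem_zpowers hg
    rwa [Nat.card_eq_fintype_card, ZMod.card_units] at this
  obtain ⟨w, hw⟩ := ZMod.unitsMap_surjective (dvd_pow_self p (Nat.one_le_iff_ne_zero.mp hn)) g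
  set b := w ^ (p ^ (n - 1)) with hb
  have hc : Nat.Coprime p (p - 1) := (Nat.Prime.coprime_iff_not_dvd hp).mpr
    (fun h => by have h2 := hp.two_le; have := Nat.le_of_dvd (by omega) h; omega)
  have hcpp : Nat.Coprime (p - 1) (p ^ (n - 1)) := Nat.Coprime.pow_right _ hc.symm
  have hob : orderOf b = p - 1 := by
    have h1 : b ^ (p - 1) = 1 := by
      rw [hb, ← pow_mul, ← hcard]
      exact pow_card_eq_one'
    have h2 : p - 1 ∣ orderOf b := by
      have hmap : orderOf
          (ZMod.unitsMap (dvd_pow_self p (Nat.one_le_iff_ne_zero.mp hn)) b) ∣ orderOf b :=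
        orderOf_map_dvd _ b
      have : ZMod.unitsMap (dvd_pow_self p (Nat.one_le_iff_ne_zero.mp hn)) b
          = g ^ (p ^ (n - 1)) := by
        rw [hb, map_pow, hw]
      rw [this] at hmap
      rwa [Nat.Coprime.orderOf_pow (by rw [hog]; exact hcpp), hog] at hmap
    exact Nat.dvd_antisymm (orderOf_dvd_of_pow_eq_one h1) h2
  have hco : Nat.Coprime (orderOf u) (orderOf b) := by
    rw [hou, hob]; exact hc.pow_left _
  refine isCyclic_of_orderOf_eq_card (u * b) ?_
  rw [(Commute.all u b).orderOf_mul_eq_mul_orderOf_of_coprime hco, hou, hob, hcard]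


/-- For an odd prime ℓ and integers k₁, k₂ ≥ 2, n ≥ 1: componentwise reduction
mod ℓ maps Λₙ onto Λ₁, and the number of pairs (d₁, d₂) ∈ Λₙ with
d₁ ≡ 1 ≡ d₂ (mod ℓ) equals ℓ^(n−1)·λ₁/λₙ, where
λⱼ = gcd(ℓʲ − ℓ^(j−1), k₁ − 1, k₂ − 1) and
Λⱼ = {(v^(k₁−1), v^(k₂−1)) : v a unit of ℤ/ℓʲℤ}. -/
theorem stmt_13 (ℓ : ℕ) (hℓ : ℓ.Prime) (hℓodd : ℓ ≠ 2)
    (k₁ k₂ n : ℕ) (hk₁ : 2 ≤ k₁) (hk₂ : 2 ≤ k₂) (hn : 1 ≤ n) :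
    (∀ q : ZMod ℓ × ZMod ℓ,
      (∃ w : (ZMod ℓ)ˣ, q = ((w : ZMod ℓ) ^ (k₁ - 1), (w : ZMod ℓ) ^ (k₂ - 1))) →
      ∃ v : (ZMod (ℓ ^ n))ˣ,
        (ZMod.castHom (dvd_pow_self ℓ (Nat.one_le_iff_ne_zero.mp hn)) (ZMod ℓ)
            ((v : ZMod (ℓ ^ n)) ^ (k₁ - 1)),
          ZMod.castHom (dvd_pow_self ℓ (Nat.one_le_iff_ne_zero.mp hn)) (ZMod ℓ)
            ((v : ZMod (ℓ ^ n)) ^ (k₂ - 1))) = q) ∧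
    Nat.card {p : ZMod (ℓ ^ n) × ZMod (ℓ ^ n) //
        (∃ v : (ZMod (ℓ ^ n))ˣ,
          p = ((v : ZMod (ℓ ^ n)) ^ (k₁ - 1), (v : ZMod (ℓ ^ n)) ^ (k₂ - 1))) ∧
        ZMod.castHom (dvd_pow_self ℓ (Nat.one_le_iff_ne_zero.mp hn)) (ZMod ℓ) p.1 = 1 ∧
        ZMod.castHom (dvd_pow_self ℓ (Nat.one_le_iff_ne_zero.mp hn)) (ZMod ℓ) p.2 = 1} =
      ℓ ^ (n - 1) * Nat.gcd (ℓ - 1) (Nat.gcd (k₁ - 1) (k₂ - 1)) /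
        Nat.gcd (ℓ ^ n - ℓ ^ (n - 1)) (Nat.gcd (k₁ - 1) (k₂ - 1)) := by
  haveI : Fact ℓ.Prime := ⟨hℓ⟩
  haveI : NeZero (ℓ ^ n) := ⟨pow_ne_zero n hℓ.pos.ne'⟩
  haveI : IsCyclic (ZMod (ℓ ^ n))ˣ := zmod_pow_units_isCyclic ℓ hℓ hℓodd n hn
  have hdvd : ℓ ∣ ℓ ^ n := dvd_pow_self ℓ (Nat.one_le_iff_ne_zero.mp hn)
  set r := ZMod.unitsMap hdvd with hrdef
  have hbridge : ∀ x : (ZMod (ℓ ^ n))ˣ,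
      ZMod.castHom hdvd (ZMod ℓ) (x : ZMod (ℓ ^ n)) = ((r x : (ZMod ℓ)ˣ) : ZMod ℓ) :=
    fun _ => rfl
  constructor
  · rintro q ⟨w, rfl⟩
    obtain ⟨v, hv⟩ := ZMod.unitsMap_surjective (n := ℓ) hdvd w
    refine ⟨v, ?_⟩
    have h1 : ∀ j : ℕ, ZMod.castHom hdvd (ZMod ℓ) ((v : ZMod (ℓ ^ n)) ^ j)
        = (w : ZMod ℓ) ^ j := by
      intro j
      rw [map_pow, hbridge, hv]
    rw [h1, h1]
  · -- notation
    set a := k₁ - 1 with ha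
    set b := k₂ - 1 with hbq
    set g := Nat.gcd a b with hgdef
    set ψ := ((powMonoidHom a : (ZMod (ℓ ^ n))ˣ →* (ZMod (ℓ ^ n))ˣ).prod
      (powMonoidHom b)) with hψdef
    set ψ₁ := ((powMonoidHom a : (ZMod ℓ)ˣ →* (ZMod ℓ)ˣ).prod (powMonoidHom b)) with hψ₁def
    set ρ := (r.prodMap r) with hρdef
    have hψapp : ∀ v : (ZMod (ℓ ^ n))ˣ, ψ v = (v ^ a, v ^ b) := fun _ => rfl
    have hρker : ∀ x : (ZMod (ℓ ^ n))ˣ × (ZMod (ℓ ^ n))ˣ,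
        x ∈ ρ.ker ↔ (r x.1 = 1 ∧ r x.2 = 1) := by
      intro x
      rw [MonoidHom.mem_ker]
      show (r x.1, r x.2) = 1 ↔ _
      exact Prod.mk_eq_one
    have hunit1 : ∀ x : (ZMod (ℓ ^ n))ˣ,
        r x = 1 ↔ ZMod.castHom hdvd (ZMod ℓ) (x : ZMod (ℓ ^ n)) = 1 := by
      intro x
      rw [hbridge, Units.val_eq_one]
    -- the equivalence
    have hcardS : Nat.card {p : ZMod (ℓ ^ n) × ZMod (ℓ ^ n) //
        (∃ v : (ZMod (ℓ ^ n))ˣ,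
          p = ((v : ZMod (ℓ ^ n)) ^ a, (v : ZMod (ℓ ^ n)) ^ b)) ∧
        ZMod.castHom hdvd (ZMod ℓ) p.1 = 1 ∧
        ZMod.castHom hdvd (ZMod ℓ) p.2 = 1} = Nat.card (ψ.range ⊓ ρ.ker : Subgroup _) := by
      apply Nat.card_congr
      apply Equiv.symm
      refine Equiv.ofBijective (fun (x : ↥(ψ.range ⊓ ρ.ker)) =>
        ⟨((x.1.1 : ZMod (ℓ ^ n)), (x.1.2 : ZMod (ℓ ^ n))), ?_⟩) ⟨?_, ?_⟩
      · obtain ⟨hx1, hx2⟩ := Subgroup.mem_inf.mp x.2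
        obtain ⟨v, hv⟩ := hx1
        rw [hρker] at hx2
        refine ⟨⟨v, ?_⟩, ?_, ?_⟩
        · rw [← hv, hψapp]
          simp
        · rw [← hunit1]
          exact hx2.1
        · rw [← hunit1]
          exact hx2.2
      · intro x y hxy
        simp only [Subtype.mk.injEq, Prod.mk.injEq] at hxy
        apply Subtype.ext
        exact Prod.ext (Units.ext hxy.1) (Units.ext hxy.2)
      · rintro ⟨p, ⟨v, rfl⟩, h1, h2⟩
        refine ⟨⟨(v ^ a, v ^ b), Subgroup.mem_inf.mpr ⟨⟨v, rfl⟩, (hρker _).mpr ⟨?_, ?_⟩⟩⟩, ?_⟩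
        · rw [hunit1]
          simpa using h1
        · rw [hunit1]
          simpa using h2
        · apply Subtype.ext
          simp
    -- kernel of ψ is kernel of the g-th power map
    have hkerψ : ψ.ker = (powMonoidHom g : _ →* (ZMod (ℓ ^ n))ˣ).ker := by
      ext v
      rw [MonoidHom.mem_ker, MonoidHom.mem_ker, hψapp, Prod.mk_eq_one, powMonoidHom_apply,
        ← orderOf_dvd_iff_pow_eq_one, ← orderOf_dvd_iff_pow_eq_one,
        ← orderOf_dvd_iff_pow_eq_one, hgdef, Nat.dvd_gcd_iff]
    have hkerψ₁ : ψ₁.ker = (powMonoidHom g : _ →* (ZMod ℓ)ˣ).ker := by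
      ext v
      rw [MonoidHom.mem_ker, MonoidHom.mem_ker]
      show (v ^ a, v ^ b) = 1 ↔ v ^ g = 1
      rw [Prod.mk_eq_one, ← orderOf_dvd_iff_pow_eq_one, ← orderOf_dvd_iff_pow_eq_one,
        ← orderOf_dvd_iff_pow_eq_one, hgdef, Nat.dvd_gcd_iff]
    -- commuting square
    have hcomm : ∀ v : (ZMod (ℓ ^ n))ˣ, ρ (ψ v) = ψ₁ (r v) := by
      intro v
      show (r (v ^ a), r (v ^ b)) = ((r v) ^ a, (r v) ^ b)
      rw [map_pow, map_pow]
    set K := (ρ.comp ψ).ker with hKdef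
    have hKcomap : K = ψ₁.ker.comap r := by
      ext v
      rw [hKdef, MonoidHom.mem_ker, Subgroup.mem_comap, MonoidHom.mem_ker,
        MonoidHom.comp_apply, hcomm]
    have hHK : ψ.range ⊓ ρ.ker = K.map ψ := by
      ext x
      constructor
      · intro hx
        obtain ⟨⟨v, hv⟩, h2⟩ := Subgroup.mem_inf.mp hx
        refine Subgroup.mem_map.mpr ⟨v, ?_, hv⟩
        show ρ.comp ψ v = 1
        rw [MonoidHom.comp_apply, hv]
        exact MonoidHom.mem_ker.mp h2
      · intro hx
        obtain ⟨v, hv, rfl⟩ := Subgroup.mem_map.mp hx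
        have hv' : ρ.comp ψ v = 1 := hv
        rw [MonoidHom.comp_apply] at hv'
        exact Subgroup.mem_inf.mpr ⟨⟨v, rfl⟩, MonoidHom.mem_ker.mpr hv'⟩
    -- cardinalities
    have hm : Nat.card (ZMod (ℓ ^ n))ˣ = ℓ ^ (n - 1) * (ℓ - 1) := by
      rw [Nat.card_eq_fintype_card, ZMod.card_units_eq_totient, Nat.totient_prime_pow hℓ hn]
    have hm1 : Nat.card (ZMod ℓ)ˣ = ℓ - 1 := by
      rw [Nat.card_eq_fintype_card, ZMod.card_units]
    have hcardkerψ : Nat.card ψ.ker = Nat.gcd (ℓ ^ (n - 1) * (ℓ - 1)) g := by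
      rw [hkerψ, aux3, hm]
    have hcardkerψ₁ : Nat.card ψ₁.ker = Nat.gcd (ℓ - 1) g := by
      rw [hkerψ₁, aux3, hm1]
    have hrsurj : Function.Surjective r := ZMod.unitsMap_surjective hdvd
    have hcardkerr : Nat.card r.ker = ℓ ^ (n - 1) := by
      have h1 := aux1 r
      rw [MonoidHom.range_eq_top.mpr hrsurj] at h1
      rw [hm, Subgroup.card_top, hm1] at h1
      have hpos : 0 < ℓ - 1 := by have := hℓ.two_le; omega
      apply Nat.eq_of_mul_eq_mul_left hpos
      calc (ℓ - 1) * Nat.card r.ker = Nat.card r.ker * (ℓ - 1) := mul_comm _ _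
        _ = ℓ ^ (n - 1) * (ℓ - 1) := by rw [← h1, mul_comm]
        _ = (ℓ - 1) * ℓ ^ (n - 1) := mul_comm _ _
    have hψkerle : ψ.ker ≤ K := by
      intro v hv
      rw [MonoidHom.mem_ker] at hv
      rw [hKdef, MonoidHom.mem_ker, MonoidHom.comp_apply, hv, map_one]
    have hrkerle : r.ker ≤ K := by
      intro v hv
      rw [MonoidHom.mem_ker] at hv
      rw [hKdef, MonoidHom.mem_ker, MonoidHom.comp_apply, hcomm, hv, map_one]
    have eq1 := aux2 ψ K hψkerle
    have eq2 := aux2 r K hrkerle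
    have hKmapr : K.map r = ψ₁.ker := by
      rw [hKcomap]
      exact Subgroup.map_comap_eq_self_of_surjective hrsurj _
    rw [hKmapr, hcardkerψ₁, hcardkerr] at eq2
    rw [← hHK, hcardkerψ] at eq1
    -- final arithmetic
    have hmsub : ℓ ^ n - ℓ ^ (n - 1) = ℓ ^ (n - 1) * (ℓ - 1) := by
      have hle : ℓ ^ (n - 1) ≤ ℓ ^ n := Nat.pow_le_pow_right hℓ.pos (by omega)
      have h1 : 1 ≤ ℓ := hℓ.pos
      zify [hle, h1]
      have hpow : (ℓ : ℤ) ^ n = (ℓ : ℤ) ^ (n - 1) * ℓ := by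
        rw [← pow_succ]
        congr 1
        omega
      linear_combination hpow
    rw [hcardS, hmsub]
    have hgcdpos : 0 < Nat.gcd (ℓ ^ (n - 1) * (ℓ - 1)) g := by
      apply Nat.gcd_pos_of_pos_left
      have := hℓ.two_le
      have : 0 < ℓ ^ (n - 1) := Nat.pow_pos hℓ.pos
      have : 0 < ℓ - 1 := by have := hℓ.two_le; omega
      positivity
    symm
    apply Nat.div_eq_of_eq_mul_left hgcdpos
    calc ℓ ^ (n - 1) * Nat.gcd (ℓ - 1) g
        = Nat.gcd (ℓ - 1) g * ℓ ^ (n - 1) := mul_comm _ _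
      _ = Nat.card K := eq2
      _ = Nat.card (ψ.range ⊓ ρ.ker : Subgroup _) * Nat.gcd (ℓ ^ (n - 1) * (ℓ - 1)) g := eq1.symm
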